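/- (Condition (G) implies linear growth, partial differentiable case.) Assume Λ is nonnegative, its effective domain is strictly star-shaped in the control variable with respect to the origin, and the partial derivative D_uΛ(s,y,u) := lim_{h→0} (Λ(s,y,u+hu) − Λ(s,y,u))/h exists at every (s,y,u) ∈ Dom(Λ) with u ∈ 𝒰. If for every M ∈ ℝ there exists R > 0 such that Λ(s,y,u) − D_uΛ(s,y,u) ≤ M whenever (s,y,u) ∈ Dom(Λ), u ∈ 𝒰 and |u| ≥ R, then Λ has linear growth from below: there exist α > 0 and d ≥ 0 such that Λ(s,y,u) ≥ α|u| − d for a.e. s ∈ [0,T] and every y ∈ ℝⁿ, u ∈ 𝒰. In fact, if R > 0 is such that D_uΛ(s,y,w) − Λ(s,y,w) ≥ 1 whenever (s,y,w) ∈ Dom(Λ), w ∈ 𝒰, |w| ≥ R, one may take α = 1/R and d = 2. -/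

import Mathlib

open MeasureTheory Set Filter
open scoped ENNReal NNReal

noncomputable section

/-- Euclidean space `ℝ^k`. -/
abbrev Vec (k : ℕ) : Type := EuclideanSpace ℝ (Fin k)

/-- The control set is a nonempty cone. -/
def IsCone {k : ℕ} (U : Set (Vec k)) : Prop :=
  U.Nonempty ∧ ∀ u ∈ U, ∀ c : ℝ, 0 < c → c • u ∈ U

variable {n m : ℕ}

/-- The effective domain of the Lagrangian, inside `[0,T] × ℝⁿ × ℝᵐ`. -/
def domSet (T : ℝ) (L : ℝ → Vec n → Vec m → ℝ≥0∞) : Set (ℝ × Vec n × Vec m) :=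
  {p | p.1 ∈ Icc 0 T ∧ L p.1 p.2.1 p.2.2 ≠ ⊤}

/-- Boundary of the effective domain relative to `[0,T] × ℝⁿ × ℝᵐ`. -/
def bdryDom (T : ℝ) (L : ℝ → Vec n → Vec m → ℝ≥0∞) : Set (ℝ × Vec n × Vec m) :=
  closure (domSet T L) ∩
    closure ((Icc (0:ℝ) T ×ˢ (univ : Set (Vec n × Vec m))) \ domSet T L)

/-- Distance to the boundary of the effective domain. -/
def distBdry (T : ℝ) (L : ℝ → Vec n → Vec m → ℝ≥0∞) (p : ℝ × Vec n × Vec m) : ℝ :=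
  Metric.infDist p (bdryDom T L)

/-- The effective domain is strictly star-shaped in the control variable. -/
def StarShapedDom (T : ℝ) (L : ℝ → Vec n → Vec m → ℝ≥0∞) : Prop :=
  ∀ᵐ s ∂(volume : Measure ℝ), s ∈ Icc (0:ℝ) T → ∀ (y : Vec n) (u : Vec m),
    L s y u ≠ ⊤ → ∀ r : ℝ, 0 < r → r ≤ 1 → L s y (r • u) ≠ ⊤

/-- Linear growth from below: `L(s,y,u) ≥ α‖u‖ − d` for `u ∈ U`. -/
def LinearGrowth (T : ℝ) (L : ℝ → Vec n → Vec m → ℝ≥0∞) (U : Set (Vec m))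
    (α d : ℝ) : Prop :=
  ∀ᵐ s ∂(volume : Measure ℝ), s ∈ Icc (0:ℝ) T → ∀ y : Vec n, ∀ u ∈ U,
    ENNReal.ofReal (α * ‖u‖ - d) ≤ L s y u

/-- Condition (S), with explicit constants `κ, A, γ, ε`. -/
def ConditionSWith (T : ℝ) (L : ℝ → Vec n → Vec m → ℝ≥0∞) (U : Set (Vec m))
    (κ A : ℝ) (γ : ℝ → ℝ) (ε : ℝ) : Prop :=
  0 ≤ κ ∧ 0 ≤ A ∧ (∀ s, 0 ≤ γ s) ∧ IntegrableOn γ (Icc 0 T) ∧ 0 < ε ∧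
  ∀ᵐ s ∂(volume : Measure ℝ), s ∈ Icc (0:ℝ) T →
    ∀ s₁ ∈ Icc (s - ε) (s + ε) ∩ Icc (0:ℝ) T, ∀ s₂ ∈ Icc (s - ε) (s + ε) ∩ Icc (0:ℝ) T,
    ∀ y : Vec n, ∀ u ∈ U, L s₁ y u ≠ ⊤ → L s₂ y u ≠ ⊤ →
      ENNReal.ofReal |(L s₂ y u).toReal - (L s₁ y u).toReal| ≤
        (ENNReal.ofReal κ * L s y u + ENNReal.ofReal (A * ‖u‖ + γ s)) *
          ENNReal.ofReal |s₂ - s₁|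

/-- The constant `c_t(B) = (B + d(T−t))/(α(T−t))`. -/
def cLow (T α d B t : ℝ) : ℝ := (B + d * (T - t)) / (α * (T - t))

/-- The constant `Φ(B) = κB + (A/α)(B + dT) + ‖γ‖₁`. -/
def PhiB (T κ A : ℝ) (γ : ℝ → ℝ) (α d B : ℝ) : ℝ :=
  κ * B + A / α * (B + d * T) + ∫ s in Icc (0:ℝ) T, γ s

/-- Radial convexity in the control variable. -/
def RadiallyConvex (T : ℝ) (L : ℝ → Vec n → Vec m → ℝ≥0∞) (U : Set (Vec m)) : Prop :=
  ∀ᵐ s ∂(volume : Measure ℝ), s ∈ Icc (0:ℝ) T → ∀ y : Vec n, ∀ u ∈ U,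
    ∀ r₁ r₂ : ℝ, 0 < r₁ → 0 < r₂ → ∀ a c : ℝ, 0 ≤ a → 0 ≤ c → a + c = 1 →
      L s y ((a * r₁ + c * r₂) • u) ≤
        ENNReal.ofReal a * L s y (r₁ • u) + ENNReal.ofReal c * L s y (r₂ • u)

/-- A selection of the radial convex subdifferential `∂_r L(s,y,ru)` at `r = 1`. -/
def IsRadialSelection (T : ℝ) (L : ℝ → Vec n → Vec m → ℝ≥0∞) (U : Set (Vec m))
    (Q : ℝ → Vec n → Vec m → ℝ) : Prop :=
  ∀ s ∈ Icc (0:ℝ) T, ∀ y : Vec n, ∀ u ∈ U, L s y u ≠ ⊤ → ∀ r : ℝ, 0 < r →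
    ENNReal.ofReal ((L s y u).toReal + Q s y u * (r - 1)) ≤ L s y (r • u)

/-- `L` is bounded on the bounded sets that are well-inside its domain. -/
def BddWellInside (T : ℝ) (L : ℝ → Vec n → Vec m → ℝ≥0∞) : Prop :=
  ∀ C > (0:ℝ), ∀ ρ > (0:ℝ), ∃ M : ℝ,
    ∀ s ∈ Icc (0:ℝ) T, ∀ (y : Vec n) (u : Vec m), L s y u ≠ ⊤ →
      ‖y‖ + ‖u‖ ≤ C → ρ ≤ distBdry T L (s, y, u) → L s y u ≤ ENNReal.ofReal M

/-- Condition (H_B^δ), radial convex form. -/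
def ConditionH (T : ℝ) (L : ℝ → Vec n → Vec m → ℝ≥0∞) (U : Set (Vec m))
    (α d κ A : ℝ) (γ : ℝ → ℝ) (δ B : ℝ) : Prop :=
  ∀ K ≥ (0:ℝ), ∃ ν > (0:ℝ), ∃ c > cLow T α d B δ, ∃ Q : ℝ → Vec n → Vec m → ℝ,
    IsRadialSelection T L U Q ∧
    ∀ ρ > (0:ℝ), ∃ Sup Inf : ℝ,
      (∀ s ∈ Icc (0:ℝ) T, ∀ y : Vec n, ‖y‖ ≤ K → ∀ u ∈ U, ν ≤ ‖u‖ → L s y u ≠ ⊤ →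
        (L s y u).toReal - Q s y u ≤ Sup) ∧
      (∀ s ∈ Icc (0:ℝ) T, ∀ y : Vec n, ‖y‖ ≤ K → ∀ u ∈ U, ‖u‖ < c → L s y u ≠ ⊤ →
        ρ ≤ distBdry T L (s, y, u) → Inf ≤ (L s y u).toReal - Q s y u) ∧
      Sup + 2 * PhiB T κ A γ α d B < Inf

/-- Condition (M_B^δ), radial convex form. -/
def ConditionM (T : ℝ) (L : ℝ → Vec n → Vec m → ℝ≥0∞) (U : Set (Vec m))
    (α d : ℝ) (δ B : ℝ) : Prop :=
  ∀ K ≥ (0:ℝ), ∃ ν > (0:ℝ), ∃ c > cLow T α d B δ, ∃ Q : ℝ → Vec n → Vec m → ℝ,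
    IsRadialSelection T L U Q ∧
    ∀ ρ > (0:ℝ),
      (∃ Inf : ℝ, ∀ s ∈ Icc (0:ℝ) T, ∀ y : Vec n, ‖y‖ ≤ K → ∀ u ∈ U, ‖u‖ < c →
        L s y u ≠ ⊤ → ρ ≤ distBdry T L (s, y, u) → Inf ≤ (L s y u).toReal - Q s y u) ∧
      (∃ Sup : ℝ, ∀ s ∈ Icc (0:ℝ) T, ∀ y : Vec n, ‖y‖ ≤ K → ∀ u ∈ U, ν ≤ ‖u‖ →
        L s y u ≠ ⊤ → (L s y u).toReal - Q s y u ≤ Sup)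

/-- Hypothesis (h₁): the effective domain is a product `[0,T] × D`. -/
def Hyp1 (T : ℝ) (L : ℝ → Vec n → Vec m → ℝ≥0∞) : Prop :=
  ∃ D : Set (Vec n × Vec m), domSet T L = Icc (0:ℝ) T ×ˢ D

/-- Hypothesis (h₂): `L` tends uniformly to `+∞` at the boundary of its domain. -/
def Hyp2 (T : ℝ) (L : ℝ → Vec n → Vec m → ℝ≥0∞) (U : Set (Vec m)) : Prop :=
  ∀ M : ℝ, ∃ ρ > (0:ℝ), ∀ s ∈ Icc (0:ℝ) T, ∀ y : Vec n, ∀ u ∈ U, L s y u ≠ ⊤ →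
    distBdry T L (s, y, u) < ρ → ENNReal.ofReal M ≤ L s y u

/-- The Bolza functional `J_t(y,u)`. -/
def Jfun (T : ℝ) (L : ℝ → Vec n → Vec m → ℝ≥0∞) (g : Vec n → ℝ≥0∞)
    (t : ℝ) (y : ℝ → Vec n) (u : ℝ → Vec m) : ℝ≥0∞ :=
  (∫⁻ s in Icc t T, L s (y s) (u s)) + g (y T)

/-- An admissible pair for problem (P_{t,x}). -/
def Admissible (T : ℝ) (L : ℝ → Vec n → Vec m → ℝ≥0∞) (U : Set (Vec m))
    (b : Vec n → Vec m →L[ℝ] Vec n) (g : Vec n → ℝ≥0∞) (S : Set (Vec n))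
    (t : ℝ) (x : Vec n) (y : ℝ → Vec n) (u : ℝ → Vec m) : Prop :=
  Measurable u ∧ (∀ᵐ s ∂(volume : Measure ℝ), s ∈ Icc t T → u s ∈ U) ∧
  IntegrableOn (fun τ => b (y τ) (u τ)) (Icc t T) ∧
  (∀ s ∈ Icc t T, y s = x + ∫ τ in Icc t s, b (y τ) (u τ)) ∧
  (∀ s ∈ Icc t T, y s ∈ S) ∧
  Jfun T L g t y u ≠ ⊤

/-- The value `inf (P_{t,x})`. -/
def infP (T : ℝ) (L : ℝ → Vec n → Vec m → ℝ≥0∞) (U : Set (Vec m))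
    (b : Vec n → Vec m →L[ℝ] Vec n) (g : Vec n → ℝ≥0∞) (S : Set (Vec n))
    (t : ℝ) (x : Vec n) : ℝ≥0∞ :=
  sInf {v | ∃ y u, Admissible T L U b g S t x y u ∧ Jfun T L g t y u = v}

/-- A minimizing sequence for (P_{t,x}). -/
def MinimizingSeq (T : ℝ) (L : ℝ → Vec n → Vec m → ℝ≥0∞) (U : Set (Vec m))
    (b : Vec n → Vec m →L[ℝ] Vec n) (g : Vec n → ℝ≥0∞) (S : Set (Vec n))
    (t : ℝ) (x : Vec n) (y : ℕ → ℝ → Vec n) (u : ℕ → ℝ → Vec m) : Prop :=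
  (∀ j, Admissible T L U b g S t x (y j) (u j)) ∧
  Tendsto (fun j => Jfun T L g t (y j) (u j)) atTop (nhds (infP T L U b g S t x))

/-- Condition (G) implies linear growth, partial differentiable case. -/
theorem stmt_3 (T : ℝ) (hT : 0 < T) (n m : ℕ)
    (L : ℝ → Vec n → Vec m → ℝ≥0∞)
    (hmeas : Measurable fun p : ℝ × Vec n × Vec m => L p.1 p.2.1 p.2.2)
    (U : Set (Vec m)) (hU : IsCone U)
    (hstar : StarShapedDom T L)
    (DL : ℝ → Vec n → Vec m → ℝ)
    (hdiff : ∀ s ∈ Icc (0:ℝ) T, ∀ (y : Vec n), ∀ u ∈ U, L s y u ≠ ⊤ →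
      (∀ᶠ h : ℝ in nhds 0, L s y ((1 + h) • u) ≠ ⊤) ∧
      HasDerivAt (fun h : ℝ => (L s y ((1 + h) • u)).toReal) (DL s y u) 0)
    (hG : ∀ M : ℝ, ∃ R > (0:ℝ), ∀ s ∈ Icc (0:ℝ) T, ∀ (y : Vec n), ∀ u ∈ U,
      L s y u ≠ ⊤ → R ≤ ‖u‖ → (L s y u).toReal - DL s y u ≤ M) :
    (∃ α > (0:ℝ), ∃ d : ℝ, 0 ≤ d ∧ LinearGrowth T L U α d) ∧
    ∀ R > (0:ℝ),
      (∀ s ∈ Icc (0:ℝ) T, ∀ (y : Vec n), ∀ w ∈ U, L s y w ≠ ⊤ → R ≤ ‖w‖ →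
        1 ≤ DL s y w - (L s y w).toReal) →
      LinearGrowth T L U (1 / R) 2 := by
  have main : ∀ R > (0:ℝ),
      (∀ s ∈ Icc (0:ℝ) T, ∀ (y : Vec n), ∀ w ∈ U, L s y w ≠ ⊤ → R ≤ ‖w‖ →
        1 ≤ DL s y w - (L s y w).toReal) →
      LinearGrowth T L U (1 / R) 2 := by
    intro R hR hcond
    unfold LinearGrowth
    filter_upwards [hstar] with s hst hs y u hu
    by_cases hfin : L s y u = ⊤
    · simp [hfin]
    rcases le_or_gt ‖u‖ (2 * R) with hle | hgt
    · have h1 : 1 / R * ‖u‖ ≤ 2 := by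
        have := mul_le_mul_of_nonneg_left hle (le_of_lt (one_div_pos.mpr hR))
        calc 1 / R * ‖u‖ ≤ 1 / R * (2 * R) := this
          _ = 2 := by field_simp
      rw [ENNReal.ofReal_eq_zero.mpr (by linarith)]
      exact zero_le
    · have hu0 : 0 < ‖u‖ := lt_trans (by positivity) hgt
      set r₀ : ℝ := R / ‖u‖ with hr₀def
      have hr₀pos : 0 < r₀ := div_pos hR hu0
      have hr₀lt : r₀ < 1 := by
        rw [div_lt_one hu0]; linarith
      set F : ℝ → ℝ := fun x => (L s y (x • u)).toReal with hF
      have hFfin : ∀ x : ℝ, 0 < x → x ≤ 1 → L s y (x • u) ≠ ⊤ := fun x hx hx1 =>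
        hst hs y u hfin x hx hx1
      have hderiv : ∀ x ∈ Icc r₀ 1, HasDerivAt F (DL s y (x • u) / x) x := by
        intro x hx
        have hx0 : 0 < x := lt_of_lt_of_le hr₀pos hx.1
        have hxU : x • u ∈ U := hU.2 u hu x hx0
        have hxfin := hFfin x hx0 hx.2
        obtain ⟨-, hD⟩ := hdiff s hs y (x • u) hxU hxfin
        have hcomp : HasDerivAt (fun z : ℝ => z / x - 1) (1 / x) x := by
          simpa using ((hasDerivAt_id x).div_const x).sub_const 1
        have h0 : x / x - 1 = 0 := by field_simp; norm_num
        have hc := HasDerivAt.comp x (h0 ▸ hD) hcomp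
        have heq : ((fun h : ℝ => (L s y ((1 + h) • (x • u))).toReal) ∘
            fun z : ℝ => z / x - 1) = F := by
          funext z
          simp only [Function.comp, hF]
          congr 2
          rw [smul_smul]
          congr 1
          field_simp
          ring
        rw [heq] at hc
        rw [mul_one_div] at hc
        exact hc
      set φ : ℝ → ℝ := fun x => (F x + 1) / x with hφ
      have hφderiv : ∀ x ∈ Icc r₀ 1,
          HasDerivAt φ ((DL s y (x • u) / x * x - (F x + 1) * 1) / x ^ 2) x := by
        intro x hx
        have hx0 : 0 < x := lt_of_lt_of_le hr₀pos hx.1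
        exact ((hderiv x hx).add_const 1).div (hasDerivAt_id x) (ne_of_gt hx0)
      have hmono : MonotoneOn φ (Icc r₀ 1) := by
        apply monotoneOn_of_hasDerivWithinAt_nonneg (convex_Icc r₀ 1)
          (f' := fun x => (DL s y (x • u) / x * x - (F x + 1) * 1) / x ^ 2)
        · intro x hx
          exact (hφderiv x hx).continuousAt.continuousWithinAt
        · intro x hx
          rw [interior_Icc] at hx
          exact (hφderiv x ⟨le_of_lt hx.1, le_of_lt hx.2⟩).hasDerivWithinAt
        · intro x hx
          rw [interior_Icc] at hx
          have hx0 : 0 < x := lt_trans hr₀pos hx.1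
          have hnorm : R ≤ ‖x • u‖ := by
            rw [norm_smul, Real.norm_eq_abs, abs_of_pos hx0]
            calc R = r₀ * ‖u‖ := by rw [hr₀def, div_mul_cancel₀ _ (ne_of_gt hu0)]
              _ ≤ x * ‖u‖ := by
                  apply mul_le_mul_of_nonneg_right (le_of_lt hx.1) (le_of_lt hu0)
          have hone := hcond s hs y (x • u) (hU.2 u hu x hx0)
            (hFfin x hx0 (le_of_lt hx.2)) hnorm
          have hdl : DL s y (x • u) / x * x = DL s y (x • u) := by field_simp
          rw [hdl]
          apply div_nonneg _ (sq_nonneg x)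
          simp only [mul_one]
          linarith
      have hineq := hmono ⟨le_refl r₀, le_of_lt hr₀lt⟩ ⟨le_of_lt hr₀lt, le_refl 1⟩
        (le_of_lt hr₀lt)
      have hφ1 : φ 1 = F 1 + 1 := div_one _
      have hφr₀ : ‖u‖ / R ≤ φ r₀ := by
        have hFnn : (0:ℝ) ≤ F r₀ := ENNReal.toReal_nonneg
        have h2 : ‖u‖ / R = 1 / r₀ := by rw [hr₀def, one_div_div]
        rw [h2]
        show 1 / r₀ ≤ (F r₀ + 1) / r₀
        exact div_le_div_of_nonneg_right (by linarith) (le_of_lt hr₀pos)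
      have hF1 : F 1 = (L s y u).toReal := by rw [hF]; simp
      have hkey : ‖u‖ / R ≤ (L s y u).toReal + 1 := by
        rw [← hF1]
        calc ‖u‖ / R ≤ φ r₀ := hφr₀
          _ ≤ φ 1 := hineq
          _ = F 1 + 1 := hφ1
      rw [← ENNReal.ofReal_toReal hfin]
      apply ENNReal.ofReal_le_ofReal
      have : 1 / R * ‖u‖ = ‖u‖ / R := by ring
      linarith
  refine ⟨?_, main⟩
  obtain ⟨R, hRpos, hRprop⟩ := hG (-1)
  exact ⟨1 / R, by positivity, 2, by norm_num,
    main R hRpos fun s hs y w hw hfinw hRw => by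
      have := hRprop s hs y w hw hfinw hRw; linarith⟩
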